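/- The signed count Σ sgn(a,b,c) for the cyclic word a^3 b^{m−1} c b^{2n−m+2} of length 2n+5 equals −3(2n−2m+3). -/
import Mathlib


/-- The sign of a triple of positions on a cyclic arrangement of `L` points:
`+1` if `i, j, k` occur in this cyclic order, `-1` if `i, k, j` occur in this
cyclic order, and `0` if they are not distinct. -/
def cycSign {L : ℕ} (i j k : Fin L) : ℤ :=
  if (i < j ∧ j < k) ∨ (j < k ∧ k < i) ∨ (k < i ∧ i < j) then 1
  else if (i < k ∧ k < j) ∨ (k < j ∧ j < i) ∨ (j < i ∧ i < k) then -1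
  else 0

/-- The signed count `Σ sgn(a,b,c)` for a cyclic word `w` in the letters
`a = 0`, `b = 1`, `c = 2`: the sum over all choices of one occurrence of each
letter of the sign of the triple of positions. -/
def signedCount {L : ℕ} (w : Fin L → Fin 3) : ℤ :=
  ∑ i : Fin L, ∑ j : Fin L, ∑ k : Fin L,
    if w i = 0 ∧ w j = 1 ∧ w k = 2 then cycSign i j k else 0

open Finset in
/-- For the cyclic word `a^3 b^{m−1} c b^{2n−m+2}` of length `2n+5` (with
`1 ≤ m ≤ 2n+2`), the signed count `Σ sgn(a,b,c)` equals `−3(2n−2m+3)`. -/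
theorem stmt7 (n m : ℕ) (h1 : 1 ≤ m) (h2 : m ≤ 2 * n + 2) :
    signedCount (fun i : Fin (2 * n + 5) =>
      if (i : ℕ) < 3 then 0
      else if (i : ℕ) < m + 2 then 1
      else if (i : ℕ) = m + 2 then 2
      else 1) = -3 * (2 * (n : ℤ) - 2 * (m : ℤ) + 3) := by
  classical
  set L := 2 * n + 5 with hL
  have hpL : m + 2 < L := by omega
  set kp : Fin L := ⟨m + 2, hpL⟩ with hkp
  set w : Fin L → Fin 3 := fun i =>
      if (i : ℕ) < 3 then 0 else if (i : ℕ) < m + 2 then 1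
      else if (i : ℕ) = m + 2 then 2 else 1 with hw
  have hw2 : ∀ b : Fin L, w b = 2 ↔ (b : ℕ) = m + 2 := by
    intro b
    simp only [hw]
    split_ifs with hb1 hb2 hb3 <;> simp_all <;> omega
  have hw0 : ∀ b : Fin L, w b = 0 ↔ (b : ℕ) < 3 := by
    intro b
    simp only [hw]
    split_ifs with hb1 hb2 hb3 <;> simp_all <;> omega
  have hw1 : ∀ b : Fin L, w b = 1 ↔ 3 ≤ (b : ℕ) ∧ (b : ℕ) ≠ m + 2 := by
    intro b
    simp only [hw]
    split_ifs with hb1 hb2 hb3 <;> simp_all <;> omega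
  have hwkp : w kp = 2 := (hw2 kp).2 rfl
  have hk : ∀ i j : Fin L,
      (∑ k : Fin L, if w i = 0 ∧ w j = 1 ∧ w k = 2 then cycSign i j k else 0)
        = if w i = 0 ∧ w j = 1 then cycSign i j kp else 0 := by
    intro i j
    rw [Finset.sum_eq_single kp]
    · by_cases h : w i = 0 ∧ w j = 1 <;> simp [h, hwkp]
    · intro b _ hb
      have : ¬ w b = 2 := fun hc => hb (Fin.ext ((hw2 b).1 hc))
      simp [this]
    · simp
  have hsign : ∀ i j : Fin L, (i : ℕ) < 3 → 3 ≤ (j : ℕ) → (j : ℕ) ≠ m + 2 →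
      cycSign i j kp = if (j : ℕ) < m + 2 then 1 else -1 := by
    intro i j hi hj hj'
    have hkpv : (kp : ℕ) = m + 2 := rfl
    simp only [cycSign, Fin.lt_def, hkpv]
    by_cases h : (j : ℕ) < m + 2
    · rw [if_pos (Or.inl ⟨by omega, by omega⟩), if_pos h]
    · rw [if_neg (by push_neg; omega),
        if_pos (Or.inl ⟨by omega, by omega⟩), if_neg h]
  have key : ∀ i j : Fin L,
      (if w i = 0 ∧ w j = 1 then cycSign i j kp else 0)
        = if (i : ℕ) < 3 then
            (if 3 ≤ (j : ℕ) ∧ (j : ℕ) ≠ m + 2 then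
              (if (j : ℕ) < m + 2 then (1:ℤ) else -1) else 0)
          else 0 := by
    intro i j
    by_cases hi : (i : ℕ) < 3
    · by_cases hj : 3 ≤ (j : ℕ) ∧ (j : ℕ) ≠ m + 2
      · rw [if_pos ⟨(hw0 i).2 hi, (hw1 j).2 hj⟩, if_pos hi, if_pos hj,
          hsign i j hi hj.1 hj.2]
      · rw [if_neg (fun h => hj ((hw1 j).1 h.2)), if_pos hi, if_neg hj]
    · rw [if_neg (fun h => hi ((hw0 i).1 h.1)), if_neg hi]
  have hT : (∑ t ∈ range L, (if 3 ≤ t ∧ t ≠ m + 2 then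
      (if t < m + 2 then (1:ℤ) else -1) else 0))
        = (m : ℤ) - 1 - ((2*n : ℤ) - m + 2) := by
    have : ∀ t ∈ range L, (if 3 ≤ t ∧ t ≠ m + 2 then
        (if t < m + 2 then (1:ℤ) else -1) else 0)
          = (if 3 ≤ t ∧ t < m + 2 then (1:ℤ) else 0)
            + (if m + 2 < t then (-1:ℤ) else 0) := by
      intro t _
      split_ifs <;> omega
    rw [Finset.sum_congr rfl this, Finset.sum_add_distrib,
      ← Finset.sum_filter, ← Finset.sum_filter]
    have e1 : (range L).filter (fun t => 3 ≤ t ∧ t < m + 2) = Ico 3 (m+2) := by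
      ext t; simp [mem_Ico]; omega
    have e2 : (range L).filter (fun t => m + 2 < t) = Ico (m+3) L := by
      ext t; simp [mem_Ico]; omega
    rw [e1, e2, Finset.sum_const, Finset.sum_const, Nat.card_Ico, Nat.card_Ico]
    have c1 : m + 2 - 3 = m - 1 := by omega
    have c2 : L - (m + 3) = 2*n + 2 - m := by omega
    rw [c1, c2]
    have : (↑(m-1) : ℤ) = (m:ℤ) - 1 := by omega
    simp [this]
    omega
  show signedCount w = _
  unfold signedCount
  rw [Finset.sum_congr rfl (fun i _ => Finset.sum_congr rfl (fun j _ => hk i j))]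
  rw [Finset.sum_congr rfl (fun i _ => Finset.sum_congr rfl (fun j _ => key i j))]
  have hjsum : ∀ i : Fin L, (∑ j : Fin L, if (i : ℕ) < 3 then
      (if 3 ≤ (j : ℕ) ∧ (j : ℕ) ≠ m + 2 then
        (if (j : ℕ) < m + 2 then (1:ℤ) else -1) else 0) else 0)
      = if (i : ℕ) < 3 then ((m : ℤ) - 1 - ((2*n : ℤ) - m + 2)) else 0 := by
    intro i
    by_cases hi : (i : ℕ) < 3
    · simp only [if_pos hi]
      rw [Fin.sum_univ_eq_sum_range (fun t => if 3 ≤ t ∧ t ≠ m + 2 then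
        (if t < m + 2 then (1:ℤ) else -1) else 0) L, hT]
    · simp [hi]
  rw [Finset.sum_congr rfl (fun i _ => hjsum i)]
  rw [Fin.sum_univ_eq_sum_range (fun t => if t < 3 then
    ((m : ℤ) - 1 - ((2*n : ℤ) - m + 2)) else 0) L, ← Finset.sum_filter]
  have e3 : (range L).filter (fun t => t < 3) = range 3 := by
    ext t; simp; omega
  rw [e3, Finset.sum_const, Finset.card_range]
  ring
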